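/- For positive reals a, b with a ≠ b and real numbers r < s (with r, s ∉ {-1, 0}), the p-logarithmic means satisfy the strict monotonicity L_r(a,b) < L_s(a,b). -/

import Mathlib

open MeasureTheory Set

section LpAux

variable {a b x y : ℝ}

lemma Lp_aux_contOn (ha : 0 < a) (p : ℝ) : ContinuousOn (fun x : ℝ => x ^ p) (Icc a b) := by
  intro x hx
  exact (Real.continuousAt_rpow_const x p (Or.inl (lt_of_lt_of_le ha hx.1).ne')).continuousWithinAt

lemma Lp_aux_contOn' (ha : 0 < a) (p : ℝ) : ContinuousOn (fun x : ℝ => x ^ p) (Ioc a b) := by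
  intro x hx
  exact (Real.continuousAt_rpow_const x p (Or.inl (ha.trans hx.1).ne')).continuousWithinAt

lemma Lp_aux_intOn' (ha : 0 < a) (p : ℝ) : IntegrableOn (fun x : ℝ => x ^ p) (Ioc a b) volume :=
  ((Lp_aux_contOn ha p).integrableOn_Icc).mono_set Ioc_subset_Icc_self

lemma Lp_aux_Jpos (ha : 0 < a) (hab : a < b) (p : ℝ) : 0 < ∫ x in Ioc a b, x ^ p := by
  rw [setIntegral_pos_iff_support_of_nonneg_ae ?h1 (Lp_aux_intOn' ha p)]
  case h1 =>
    filter_upwards [ae_restrict_mem measurableSet_Ioc] with x hx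
    exact (Real.rpow_pos_of_pos (ha.trans hx.1) p).le
  · have hsub : Ioc a b ⊆ Function.support (fun x : ℝ => x ^ p) ∩ Ioc a b :=
      fun x hx => ⟨(Real.rpow_pos_of_pos (ha.trans hx.1) p).ne', hx⟩
    refine lt_of_lt_of_le ?_ (measure_mono hsub)
    simp [Real.volume_Ioc, hab]

lemma Lp_aux_Jzero (hab : a < b) : ∫ x in Ioc a b, (x:ℝ) ^ (0:ℝ) = b - a := by
  simp [Real.rpow_zero, Real.volume_Ioc, ENNReal.toReal_ofReal (sub_nonneg.2 hab.le), hab.le]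

lemma Lp_aux_Jval (ha : 0 < a) (hab : a < b) {p : ℝ} (hp : p ≠ -1) :
    ∫ x in Ioc a b, x ^ p = (b ^ (p + 1) - a ^ (p + 1)) / (p + 1) := by
  rw [← intervalIntegral.integral_of_le hab.le]
  exact integral_rpow (Or.inr ⟨hp, by
    rw [uIcc_of_le hab.le]
    exact fun h => absurd h.1 (by linarith)⟩)

lemma Lp_aux_rbound (ha : 0 < a) (c : ℝ) :
    ∀ᵐ x ∂(volume.restrict (Ioc a b)), ‖(fun x : ℝ => x ^ c) x‖ ≤ max (a ^ c) (b ^ c) := by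
  filter_upwards [ae_restrict_mem measurableSet_Ioc] with x hx
  have hx0 : 0 < x := ha.trans hx.1
  rw [Real.norm_of_nonneg (Real.rpow_pos_of_pos hx0 c).le]
  rcases le_or_gt 0 c with hc | hc
  · exact le_max_of_le_right (Real.rpow_le_rpow hx0.le hx.2 hc)
  · exact le_max_of_le_left (Real.rpow_le_rpow_of_nonpos ha hx.1.le hc.le)

lemma Lp_aux_Jholder (ha : 0 < a) (p q θ : ℝ) (hθ : 0 < θ) (hθ1 : θ < 1) :
    ∫ x in Ioc a b, x ^ (θ * p + (1 - θ) * q) ≤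
      (∫ x in Ioc a b, x ^ p) ^ θ * (∫ x in Ioc a b, x ^ q) ^ (1 - θ) := by
  have hθ' : 0 < 1 - θ := by linarith
  have e : Real.HolderConjugate (1 / θ) (1 / (1 - θ)) :=
    Real.holderConjugate_one_div hθ hθ' (by ring)
  set μ := volume.restrict (Ioc a b) with hμ
  have : IsFiniteMeasure μ := by
    constructor
    rw [hμ, Measure.restrict_apply_univ, Real.volume_Ioc]
    exact ENNReal.ofReal_lt_top
  have mem : ∀ c e : ℝ, MemLp (fun x : ℝ => x ^ c) (ENNReal.ofReal e) μ := by
    intro c e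
    refine MemLp.of_bound ((Lp_aux_contOn' ha c).aestronglyMeasurable measurableSet_Ioc) _
      (Lp_aux_rbound ha c)
  have key := MeasureTheory.integral_mul_le_Lp_mul_Lq_of_nonneg e
    (f := fun x : ℝ => x ^ (θ * p)) (g := fun x : ℝ => x ^ ((1 - θ) * q))
    ?hf0 ?hg0 (mem _ _) (mem _ _)
  case hf0 =>
    filter_upwards [ae_restrict_mem measurableSet_Ioc] with x hx
    exact (Real.rpow_pos_of_pos (ha.trans hx.1) _).le
  case hg0 =>
    filter_upwards [ae_restrict_mem measurableSet_Ioc] with x hx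
    exact (Real.rpow_pos_of_pos (ha.trans hx.1) _).le
  rw [one_div_one_div, one_div_one_div] at key
  calc ∫ x in Ioc a b, x ^ (θ * p + (1 - θ) * q)
      = ∫ x in Ioc a b, x ^ (θ * p) * x ^ ((1 - θ) * q) := by
        refine setIntegral_congr_fun measurableSet_Ioc fun x hx => ?_
        rw [← Real.rpow_add (ha.trans hx.1)]
    _ ≤ (∫ x in Ioc a b, (x ^ (θ * p)) ^ (1/θ)) ^ θ
          * (∫ x in Ioc a b, (x ^ ((1-θ) * q)) ^ (1/(1-θ))) ^ (1-θ) := key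
    _ = (∫ x in Ioc a b, x ^ p) ^ θ * (∫ x in Ioc a b, x ^ q) ^ (1 - θ) := by
        congr 2 <;> refine setIntegral_congr_fun measurableSet_Ioc fun x hx => ?_ <;>
          rw [← Real.rpow_mul (ha.trans hx.1).le] <;> congr 1 <;> field_simp

lemma Lp_aux_rpow_inj (hx : 0 < x) (hy : 0 < y) {c : ℝ} (hc : c ≠ 0)
    (h : x ^ c = y ^ c) : x = y := by
  have hx1 : x = (x ^ c) ^ c⁻¹ := by
    rw [← Real.rpow_mul hx.le, mul_inv_cancel₀ hc, Real.rpow_one]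
  have hy1 : y = (y ^ c) ^ c⁻¹ := by
    rw [← Real.rpow_mul hy.le, mul_inv_cancel₀ hc, Real.rpow_one]
  rw [hx1, hy1, h]

lemma Lp_aux_Jmid (ha : 0 < a) (hab : a < b) {p q : ℝ} (hpq : p ≠ q) :
    (∫ x in Ioc a b, x ^ ((p + q) / 2)) ^ 2 <
      (∫ x in Ioc a b, x ^ p) * (∫ x in Ioc a b, x ^ q) := by
  set Jp := ∫ x in Ioc a b, x ^ p with hJp
  set Jq := ∫ x in Ioc a b, x ^ q with hJq
  set Jm := ∫ x in Ioc a b, x ^ ((p + q) / 2) with hJm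
  have hJqpos : 0 < Jq := Lp_aux_Jpos ha hab q
  set t := Jm / Jq with ht
  set c := (p - q) / 2 with hc
  have hc0 : c ≠ 0 := by
    simp only [hc, div_ne_zero_iff, sub_ne_zero]
    exact ⟨hpq, two_ne_zero⟩
  set F := fun x : ℝ => x ^ p - 2 * t * x ^ ((p + q) / 2) + t ^ 2 * x ^ q with hF
  have hsq : ∀ x ∈ Ioc a b, F x = (x ^ (p/2) - t * x ^ (q/2)) ^ 2 := by
    intro x hx
    have hx0 : (0:ℝ) < x := ha.trans hx.1
    have h1 : x ^ (p/2) * x ^ (p/2) = x ^ p := by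
      rw [← Real.rpow_add hx0]; congr 1; ring
    have h2 : x ^ (p/2) * x ^ (q/2) = x ^ ((p + q)/2) := by
      rw [← Real.rpow_add hx0]; congr 1; ring
    have h3 : x ^ (q/2) * x ^ (q/2) = x ^ q := by
      rw [← Real.rpow_add hx0]; congr 1; ring
    have : (x ^ (p/2) - t * x ^ (q/2)) ^ 2 =
        x ^ (p/2) * x ^ (p/2) - 2 * t * (x ^ (p/2) * x ^ (q/2))
          + t ^ 2 * (x ^ (q/2) * x ^ (q/2)) := by ring
    rw [this, h1, h2, h3]
  have i1 := Lp_aux_intOn' (b := b) ha p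
  have i2 := (Lp_aux_intOn' (b := b) ha ((p + q)/2)).const_mul (2 * t)
  have i3 := (Lp_aux_intOn' (b := b) ha q).const_mul (t ^ 2)
  have hFint : IntegrableOn F (Ioc a b) volume := (i1.sub i2).add i3
  have i12 : IntegrableOn (fun x : ℝ => x ^ p - 2 * t * x ^ ((p + q) / 2)) (Ioc a b) volume :=
    i1.sub i2
  have hFval : ∫ x in Ioc a b, F x = Jp - 2 * t * Jm + t ^ 2 * Jq := by
    rw [hF]
    rw [integral_add i12 i3, integral_sub i1 i2,
      integral_const_mul, integral_const_mul]
  have hFpos : 0 < ∫ x in Ioc a b, F x := by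
    rw [setIntegral_pos_iff_support_of_nonneg_ae ?h1 hFint]
    case h1 =>
      filter_upwards [ae_restrict_mem measurableSet_Ioc] with x hx
      rw [hsq x hx]; positivity
    · set Z := {x : ℝ | x ∈ Ioc a b ∧ x ^ c = t} with hZ
      have hZsub : Z.Subsingleton := by
        intro x hx y hy
        exact Lp_aux_rpow_inj (ha.trans hx.1.1) (ha.trans hy.1.1) hc0 (hx.2.trans hy.2.symm)
      have hZ0 : volume Z = 0 := hZsub.measure_zero volume
      have hsub : Ioc a b \ Z ⊆ Function.support F ∩ Ioc a b := by
        rintro x ⟨hx, hxZ⟩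
        refine ⟨?_, hx⟩
        have hx0 : (0:ℝ) < x := ha.trans hx.1
        rw [Function.mem_support, hsq x hx]
        intro h
        have h' : x ^ (p/2) - t * x ^ (q/2) = 0 := by
          exact pow_eq_zero_iff (n := 2) (by norm_num) |>.mp h
        apply hxZ
        simp only [hZ, mem_setOf_eq]
        refine ⟨hx, ?_⟩
        have hq2 : (0:ℝ) < x ^ (q/2) := Real.rpow_pos_of_pos hx0 _
        have : x ^ (p/2) = t * x ^ (q/2) := by linarith
        have hxc : x ^ c = x ^ (p/2) / x ^ (q/2) := by
          rw [hc, show (p - q)/2 = p/2 - q/2 by ring, Real.rpow_sub hx0]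
        rw [hxc, this, mul_div_assoc, div_self hq2.ne', mul_one]
      calc (0:ENNReal) < volume (Ioc a b) := by simp [Real.volume_Ioc, hab]
        _ = volume (Ioc a b \ Z) := (measure_diff_null hZ0).symm
        _ ≤ volume (Function.support F ∩ Ioc a b) := measure_mono hsub
  rw [hFval, ht] at hFpos
  have e : (Jp - 2 * (Jm / Jq) * Jm + (Jm / Jq) ^ 2 * Jq) * Jq = Jp * Jq - Jm ^ 2 := by
    field_simp; ring
  have := mul_pos hFpos hJqpos
  rw [e] at this
  linarith

lemma Lp_aux_strictConvex {f : ℝ → ℝ} (hc : ConvexOn ℝ univ f)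
    (hm : ∀ x y : ℝ, x ≠ y → f ((x + y) / 2) < (f x + f y) / 2) :
    StrictConvexOn ℝ univ f := by
  rw [strictConvexOn_iff_slope_strict_mono_adjacent]
  refine ⟨convex_univ, ?_⟩
  intro x y z _ _ hxy hyz
  set m := (y + z) / 2 with hmdef
  have hym : y < m := by rw [hmdef]; linarith
  have hzy : (0:ℝ) < z - y := by linarith
  have s1 : (f y - f x) / (y - x) ≤ (f m - f y) / (m - y) :=
    hc.slope_mono_adjacent (mem_univ x) (mem_univ m) hxy hym
  have s2 : f m < (f y + f z) / 2 := hm y z hyz.ne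
  have e : m - y = (z - y) / 2 := by rw [hmdef]; ring
  have s1' : (f y - f x) / (y - x) ≤ (f m - f y) * 2 / (z - y) := by
    rwa [e, div_div_eq_mul_div] at s1
  have s3 : (f m - f y) * 2 / (z - y) < (f z - f y) / (z - y) := by
    rw [div_lt_div_iff_of_pos_right hzy]
    linarith
  linarith

lemma Lp_aux_convexOn (ha : 0 < a) (hab : a < b) :
    ConvexOn ℝ univ (fun p : ℝ => Real.log (∫ x in Ioc a b, x ^ p)) := by
  refine convexOn_iff_forall_pos.mpr ⟨convex_univ, fun p _ q _ {θ₁ θ₂} hθ₁ hθ₂ hsum => ?_⟩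
  have hθ₁1 : θ₁ < 1 := by linarith
  have h2 : θ₂ = 1 - θ₁ := by linarith
  simp only [smul_eq_mul]
  subst h2
  calc Real.log (∫ x in Ioc a b, x ^ (θ₁ * p + (1 - θ₁) * q))
      ≤ Real.log ((∫ x in Ioc a b, x ^ p) ^ θ₁ * (∫ x in Ioc a b, x ^ q) ^ (1 - θ₁)) := by
        apply Real.log_le_log (Lp_aux_Jpos ha hab _)
        exact Lp_aux_Jholder ha p q θ₁ hθ₁ hθ₁1
    _ = θ₁ * Real.log (∫ x in Ioc a b, x ^ p)
          + (1 - θ₁) * Real.log (∫ x in Ioc a b, x ^ q) := by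
        rw [Real.log_mul (Real.rpow_pos_of_pos (Lp_aux_Jpos ha hab p) _).ne'
            (Real.rpow_pos_of_pos (Lp_aux_Jpos ha hab q) _).ne',
          Real.log_rpow (Lp_aux_Jpos ha hab p), Real.log_rpow (Lp_aux_Jpos ha hab q)]

end LpAux

lemma Lp_key {a b r s : ℝ} (ha : 0 < a) (hab : a < b) (hrs : r < s)
    (hr1 : r ≠ -1) (hr0 : r ≠ 0) (hs1 : s ≠ -1) (hs0 : s ≠ 0) :
    ((b ^ (r + 1) - a ^ (r + 1)) / ((r + 1) * (b - a))) ^ (1 / r) <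
      ((b ^ (s + 1) - a ^ (s + 1)) / ((s + 1) * (b - a))) ^ (1 / s) := by
  have hba : 0 < b - a := sub_pos.2 hab
  set h : ℝ → ℝ := fun p => Real.log (∫ x in Ioc a b, x ^ p) with hh
  have hmid : ∀ p q : ℝ, p ≠ q → h ((p + q)/2) < (h p + h q)/2 := by
    intro p q hpq
    have hJ := Lp_aux_Jmid ha hab hpq
    have l := Real.log_lt_log (pow_pos (Lp_aux_Jpos ha hab _) 2) hJ
    rw [Real.log_pow, Real.log_mul (Lp_aux_Jpos ha hab p).ne' (Lp_aux_Jpos ha hab q).ne'] at l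
    simp only [hh]
    push_cast at l
    linarith
  have sconv : StrictConvexOn ℝ univ h := Lp_aux_strictConvex (Lp_aux_convexOn ha hab) hmid
  have slope := sconv.secant_strict_mono (mem_univ 0) (mem_univ r) (mem_univ s) hr0 hs0 hrs
  have h0 : h 0 = Real.log (b - a) := by simp only [hh]; rw [Lp_aux_Jzero hab]
  have hexpr : ∀ p : ℝ, p ≠ -1 →
      (b ^ (p + 1) - a ^ (p + 1)) / ((p + 1) * (b - a)) = (∫ x in Ioc a b, x ^ p) / (b - a) := by
    intro p hp
    rw [Lp_aux_Jval ha hab hp, div_div]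
  have hlog : ∀ p : ℝ, Real.log ((∫ x in Ioc a b, x ^ p) / (b - a)) = h p - h 0 := by
    intro p
    rw [Real.log_div (Lp_aux_Jpos ha hab p).ne' hba.ne', h0]
  have hpos : ∀ p : ℝ, 0 < (∫ x in Ioc a b, x ^ p) / (b - a) :=
    fun p => div_pos (Lp_aux_Jpos ha hab p) hba
  rw [hexpr r hr1, hexpr s hs1,
    Real.rpow_def_of_pos (hpos r), Real.rpow_def_of_pos (hpos s)]
  apply Real.exp_lt_exp.mpr
  rw [hlog r, hlog s]
  have hsl : (h r - h 0) / (r - 0) < (h s - h 0) / (s - 0) := slope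
  rw [sub_zero, sub_zero] at hsl
  calc (h r - h 0) * (1/r) = (h r - h 0)/r := by ring
    _ < (h s - h 0)/s := hsl
    _ = (h s - h 0) * (1/s) := by ring

theorem Lp_strict_mono (a b r s : ℝ) (ha : 0 < a) (hb : 0 < b) (hab : a ≠ b)
    (hrs : r < s) (hr1 : r ≠ -1) (hr0 : r ≠ 0) (hs1 : s ≠ -1) (hs0 : s ≠ 0) :
    ((b ^ (r + 1) - a ^ (r + 1)) / ((r + 1) * (b - a))) ^ (1 / r) <
      ((b ^ (s + 1) - a ^ (s + 1)) / ((s + 1) * (b - a))) ^ (1 / s) := by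
  rcases hab.lt_or_gt with h | h
  · exact Lp_key ha h hrs hr1 hr0 hs1 hs0
  · have e : ∀ p : ℝ, (b ^ (p + 1) - a ^ (p + 1)) / ((p + 1) * (b - a))
        = (a ^ (p + 1) - b ^ (p + 1)) / ((p + 1) * (a - b)) := by
      intro p
      rw [show a ^ (p + 1) - b ^ (p + 1) = -(b ^ (p + 1) - a ^ (p + 1)) by ring,
        show (p + 1) * (a - b) = -((p + 1) * (b - a)) by ring, neg_div_neg_eq]
    rw [e r, e s]
    exact Lp_key hb h hrs hr1 hr0 hs1 hs0
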